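/- For all α, γ ∈ ℝ and every integer j ≥ 1, the real part of the quaternion (Q¹)ʲ · Q⁴ equals (−1)ʲ · [ T_{2(j+1)}(x) − 2·(c_γ² − 1)·U_{2j}(x) ], where Tₙ(x) and Uₙ(x) denote evaluations of the Chebyshev polynomials at x = c_γ·s_α. -/

import Mathlib

open Quaternion Polynomial Polynomial.Chebyshev Real

/-- Quaternion representation of the atomic rotation in atom `P₁` (with `β = α`). -/
noncomputable def Q1 (α γ : ℝ) : ℍ[ℝ] :=
  ⟨cos (α/2)^2 - cos γ * sin (α/2)^2,
   cos (α/2) * sin (α/2) * sin γ,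
   -(sin (α/2)^2) * sin γ,
   sin (α/2) * cos (α/2) * (1 + cos γ)⟩

/-- Quaternion representation of the atomic rotation in atom `P₄` (with `β = α`). -/
noncomputable def Q4 (α γ : ℝ) : ℍ[ℝ] :=
  ⟨1 - 2 * cos (α/2)^2 * cos (γ/2)^2,
   -2 * sin (α/2) * cos (α/2) * sin (γ/2) * cos (γ/2),
   -2 * cos (α/2)^2 * sin (γ/2) * cos (γ/2),
   -2 * sin (α/2) * cos (α/2) * cos (γ/2)^2⟩

/-- The real part of `(Q¹)ʲ · Q⁴` in terms of Chebyshev polynomials evaluated at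
`x = cos(γ/2)·sin(α/2)`. -/
lemma sin_half (γ : ℝ) : sin γ = 2 * sin (γ/2) * cos (γ/2) := by
  have := Real.sin_two_mul (γ/2)
  rw [show 2*(γ/2) = γ by ring] at this
  linarith

lemma cos_half (γ : ℝ) : cos γ = 1 - 2 * sin (γ/2)^2 := by
  have := Real.cos_two_mul' (γ/2)
  rw [show 2*(γ/2) = γ by ring] at this
  have h := Real.sin_sq_add_cos_sq (γ/2)
  nlinarith

lemma Q1_sq (α γ : ℝ) :
    Q1 α γ * Q1 α γ = (2 - 4 * (cos (γ/2) * sin (α/2))^2) • Q1 α γ - 1 := by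
  have hgs := sin_half γ
  have hgc := cos_half γ
  have hα : sin (α/2)^2 + cos (α/2)^2 = 1 := sin_sq_add_cos_sq _
  have hγ : sin (γ/2)^2 + cos (γ/2)^2 = 1 := sin_sq_add_cos_sq _
  ext
  · simp only [Quaternion.re_mul, Quaternion.re_smul, Quaternion.re_sub, Quaternion.re_one]
    simp only [Q1, Quaternion.re_mul, Quaternion.re_smul, Quaternion.re_sub,
      Quaternion.re_one, hgs, hgc, smul_eq_mul]
    linear_combination (-1 + cos (α/2)^2 - 7*sin (α/2)^2 + 4*sin (α/2)^2*cos (γ/2)^2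
        + 12*sin (α/2)^2*sin (γ/2)^2 - 4*sin (α/2)^2*sin (γ/2)^2*cos (γ/2)^2
        - 4*sin (α/2)^2*sin (γ/2)^4) * hα
      + (4*sin (α/2)^2 - 4*sin (α/2)^2*sin (γ/2)^2 - 8*sin (α/2)^4
        + 8*sin (α/2)^4*sin (γ/2)^2) * hγ
  · simp only [Quaternion.imI_mul, Quaternion.imI_smul, Quaternion.imI_sub, Quaternion.imI_one]
    simp only [Q1, Quaternion.imI_mul, Quaternion.imI_smul, Quaternion.imI_sub,
      Quaternion.imI_one, hgs, hgc, smul_eq_mul]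
    linear_combination (4*sin (α/2)*cos (α/2)*sin (γ/2)*cos (γ/2)) * hα
      + (8*sin (α/2)^3*cos (α/2)*sin (γ/2)*cos (γ/2)) * hγ
  · simp only [Quaternion.imJ_mul, Quaternion.imJ_smul, Quaternion.imJ_sub, Quaternion.imJ_one]
    simp only [Q1, Quaternion.imJ_mul, Quaternion.imJ_smul, Quaternion.imJ_sub,
      Quaternion.imJ_one, hgs, hgc, smul_eq_mul]
    linear_combination (-4*sin (α/2)^2*sin (γ/2)*cos (γ/2)) * hα
      + (-8*sin (α/2)^4*sin (γ/2)*cos (γ/2)) * hγ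
  · simp only [Quaternion.imK_mul, Quaternion.imK_smul, Quaternion.imK_sub, Quaternion.imK_one]
    simp only [Q1, Quaternion.imK_mul, Quaternion.imK_smul, Quaternion.imK_sub,
      Quaternion.imK_one, hgs, hgc, smul_eq_mul]
    linear_combination (4*sin (α/2)*cos (α/2) - 4*sin (α/2)*cos (α/2)*sin (γ/2)^2) * hα
      + (8*sin (α/2)^3*cos (α/2) - 8*sin (α/2)^3*cos (α/2)*sin (γ/2)^2) * hγ

lemma T_step (k : ℤ) (y : ℝ) :
    (T ℝ (k+4)).eval y = (4*y^2-2) * (T ℝ (k+2)).eval y - (T ℝ k).eval y := by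
  have h2 := T_add_two ℝ k
  have h3 := T_add_two ℝ (k+1)
  have h4 := T_add_two ℝ (k+2)
  rw [show (k+1+2 : ℤ) = k+3 by ring, show (k+1+1 : ℤ) = k+2 by ring] at h3
  rw [show (k+2+2 : ℤ) = k+4 by ring, show (k+2+1 : ℤ) = k+3 by ring] at h4
  have e2 := congrArg (Polynomial.eval y) h2
  have e3 := congrArg (Polynomial.eval y) h3
  have e4 := congrArg (Polynomial.eval y) h4
  simp only [eval_sub, eval_mul, eval_ofNat, eval_X] at e2 e3 e4
  linear_combination e4 + 2*y*e3 + e2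

lemma U_step (k : ℤ) (y : ℝ) :
    (U ℝ (k+4)).eval y = (4*y^2-2) * (U ℝ (k+2)).eval y - (U ℝ k).eval y := by
  have h2 := U_add_two ℝ k
  have h3 := U_add_two ℝ (k+1)
  have h4 := U_add_two ℝ (k+2)
  rw [show (k+1+2 : ℤ) = k+3 by ring, show (k+1+1 : ℤ) = k+2 by ring] at h3
  rw [show (k+2+2 : ℤ) = k+4 by ring, show (k+2+1 : ℤ) = k+3 by ring] at h4
  have e2 := congrArg (Polynomial.eval y) h2
  have e3 := congrArg (Polynomial.eval y) h3
  have e4 := congrArg (Polynomial.eval y) h4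
  simp only [eval_sub, eval_mul, eval_ofNat, eval_X] at e2 e3 e4
  linear_combination e4 + 2*y*e3 + e2

lemma T_four_eval (y : ℝ) : (T ℝ 4).eval y = 8*y^4 - 8*y^2 + 1 := by
  have h := T_step 0 y
  simp only [zero_add, T_two, T_zero] at h
  simp only [eval_sub, eval_mul, eval_one, eval_pow, eval_X, eval_ofNat] at h
  linarith [h]

lemma U_two_eval (y : ℝ) : (U ℝ 2).eval y = 4*y^2 - 1 := by
  simp [U_two]

lemma key (α γ : ℝ) : ∀ j : ℕ,
    (Q1 α γ ^ j * Q4 α γ).re =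
      (-1 : ℝ) ^ j *
        ((T ℝ (2 * ((j : ℤ) + 1))).eval (cos (γ/2) * sin (α/2)) -
          2 * (cos (γ/2)^2 - 1) * (U ℝ (2 * (j : ℤ))).eval (cos (γ/2) * sin (α/2))) := by
  have hα : sin (α/2)^2 + cos (α/2)^2 = 1 := sin_sq_add_cos_sq _
  have hγ : sin (γ/2)^2 + cos (γ/2)^2 = 1 := sin_sq_add_cos_sq _
  have hgs := sin_half γ
  have hgc := cos_half γ
  intro j
  induction j using Nat.twoStepInduction with
  | zero =>
    rw [pow_zero, one_mul]
    norm_num [Q4, T_two, U_zero]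
    linear_combination (-2*cos (γ/2)^2) * hα
  | one =>
    rw [pow_one, Nat.cast_one, show (2 * ((1:ℤ)+1)) = 4 by ring, show (2 * (1:ℤ)) = 2 by ring,
      T_four_eval, U_two_eval]
    simp only [Quaternion.re_mul]
    simp only [Q1, Q4, Quaternion.re_mul, hgs, hgc]
    linear_combination (1 - 2*cos (γ/2)^2 - 2*cos (α/2)^2*cos (γ/2)^2
        + 8*sin (α/2)^2*cos (γ/2)^2 - 8*sin (α/2)^2*sin (γ/2)^2*cos (γ/2)^2) * hα
      + (2*sin (α/2)^2 - 8*sin (α/2)^2*cos (γ/2)^2 + 8*sin (α/2)^4*cos (γ/2)^2) * hγ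
  | more n ihn ihn1 =>
    set x := cos (γ/2) * sin (α/2) with hx
    have hre : (Q1 α γ ^ (n+2) * Q4 α γ).re =
        (2 - 4 * x^2) * (Q1 α γ ^ (n+1) * Q4 α γ).re - (Q1 α γ ^ n * Q4 α γ).re := by
      have hsq : Q1 α γ ^ (n+2) = Q1 α γ ^ n * (Q1 α γ * Q1 α γ) := by
        rw [pow_succ, pow_succ, mul_assoc]
      rw [hsq, Q1_sq, mul_sub, mul_smul_comm, mul_one, sub_mul, smul_mul_assoc,
        ← pow_succ, ← hx]
      simp [Quaternion.re_sub, Quaternion.re_smul]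
    rw [hre, ihn, ihn1]
    have hT := T_step (2*(n:ℤ)+2) x
    have hU := U_step (2*(n:ℤ)) x
    push_cast
    rw [show (2 * ((n:ℤ)+2+1)) = 2*(n:ℤ)+2+4 by ring,
        show (2 * ((n:ℤ)+2)) = 2*(n:ℤ)+4 by ring,
        show (2 * ((n:ℤ)+1+1)) = 2*(n:ℤ)+2+2 by ring,
        show (2 * ((n:ℤ)+1)) = 2*(n:ℤ)+2 by ring,
        hT, show (2*(n:ℤ)+4 : ℤ) = 2*(n:ℤ)+4 by ring, hU]
    ring

theorem re_q_pow_j_mul_Q4 (α γ : ℝ) (j : ℕ) (hj : 1 ≤ j) :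
    (Q1 α γ ^ j * Q4 α γ).re =
      (-1 : ℝ) ^ j *
        ((T ℝ (2 * ((j : ℤ) + 1))).eval (cos (γ/2) * sin (α/2)) -
          2 * (cos (γ/2)^2 - 1) * (U ℝ (2 * (j : ℤ))).eval (cos (γ/2) * sin (α/2))) := by
  exact key α γ j
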